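/- For every (x,y) in the open triangle Δ = {(x,y) : 0 < y < x < 1}, the function h(x,y) = 1/(x(x-y+1)) satisfies ∑_{k=0}^∞ (1/(kx+x-y+1)^3) · h(1/(kx+x-y+1), (1-x)/(kx+x-y+1)) = h(x,y); i.e., 1/(x(x-y+1)) is an eigenfunction of eigenvalue 1 for the transfer operator of T_{23,23,23}. -/

import Mathlib

/-- `h(x,y) = 1/(x(x-y+1))` is an eigenfunction of eigenvalue `1` of the transfer operator of
`T_{23,23,23}` on the open triangle `Δ = {0 < y < x < 1}`. -/
theorem stmt10 (x y : ℝ) (hy : 0 < y) (hyx : y < x) (hx : x < 1) :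
    (∑' k : ℕ, (1 / ((k : ℝ) * x + x - y + 1) ^ 3) *
      (1 / ((1 / ((k : ℝ) * x + x - y + 1)) *
        (1 / ((k : ℝ) * x + x - y + 1) - (1 - x) / ((k : ℝ) * x + x - y + 1) + 1))))
      = 1 / (x * (x - y + 1)) := by
  have hx0 : 0 < x := hy.trans hyx
  have hd : ∀ k : ℕ, 0 < (k : ℝ) * x + x - y + 1 := by
    intro k
    have : (0:ℝ) ≤ (k : ℝ) * x := by positivity
    nlinarith
  set g : ℕ → ℝ := fun k => 1 / (x * ((k : ℝ) * x + x - y + 1)) with hg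
  have hterm : ∀ k : ℕ, (1 / ((k : ℝ) * x + x - y + 1) ^ 3) *
      (1 / ((1 / ((k : ℝ) * x + x - y + 1)) *
        (1 / ((k : ℝ) * x + x - y + 1) - (1 - x) / ((k : ℝ) * x + x - y + 1) + 1)))
      = g k - g (k + 1) := by
    intro k
    have h1 := hd k
    have h2 := hd (k + 1)
    have h2' : ((k : ℝ) + 1) * x + x - y + 1 > 0 := by push_cast at h2 ⊢; linarith
    simp only [hg, Nat.cast_add, Nat.cast_one]
    rw [show 1 / ((k:ℝ) * x + x - y + 1) - (1 - x) / ((k:ℝ) * x + x - y + 1) + 1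
        = (((k:ℝ) + 1) * x + x - y + 1) / ((k:ℝ) * x + x - y + 1) by
      rw [div_sub_div_same, div_add_one h1.ne']; congr 1; ring]
    have hx0' := hx0.ne'
    have h1' := h1.ne'
    have hN : ((k:ℝ) * x + x - y + 1) + x ≠ 0 := by
      have := h2'.ne'; convert this using 1; ring
    rw [show ((k:ℝ) + 1) * x + x - y + 1 = ((k:ℝ) * x + x - y + 1) + x by ring]
    generalize ((k:ℝ) * x + x - y + 1) = d at h1' hN ⊢
    field_simp
    ring
  have hgs : HasSum (fun k : ℕ => g k - g (k + 1)) (g 0) := by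
    have hnn : ∀ k : ℕ, 0 ≤ g k - g (k + 1) := by
      intro k
      have hle : g (k + 1) ≤ g k := by
        simp only [hg]
        have h1 := hd k
        have h2 := hd (k + 1)
        apply one_div_le_one_div_of_le
        · positivity
        · push_cast; nlinarith
      linarith
    rw [hasSum_iff_tendsto_nat_of_nonneg hnn]
    have hps : ∀ n : ℕ, ∑ i ∈ Finset.range n, (g i - g (i + 1)) = g 0 - g n := by
      intro n; exact Finset.sum_range_sub' g n
    simp only [hps]
    have hTd : Filter.Tendsto (fun n : ℕ => x * ((n : ℝ) * x + x - y + 1))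
        Filter.atTop Filter.atTop := by
      have h1 : Filter.Tendsto (fun n : ℕ => (n : ℝ) * x + (x - y + 1))
          Filter.atTop Filter.atTop :=
        Filter.tendsto_atTop_add_const_right _ _
          ((tendsto_natCast_atTop_atTop (R := ℝ)).atTop_mul_const hx0)
      exact (h1.const_mul_atTop hx0).congr fun n => by ring
    have hT : Filter.Tendsto g Filter.atTop (nhds 0) := by
      refine hTd.inv_tendsto_atTop.congr fun n => ?_
      simp [hg, one_div]
    simpa using tendsto_const_nhds.sub hT
  have := (hgs.congr_fun hterm).tsum_eq
  rw [this]
  simp [hg]
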